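/- For every integer N ≥ 1, μ([0, 1/(2N+1)] ∪ [N/(N+1), 1]) = (2/log(2+√3)) · log(1 + 1/(N + (√3−1)/2)); equivalently, the μ-measure of the set of x with first SCF digit a₁(x) > N equals (2/log(2+√3)) · log((2N+√3+1)/(2N+√3−1)). -/

import Mathlib

open MeasureTheory Real Set Filter Topology

namespace SCF

/-- The involution `ι(x) = (1−x)/(1+x)`. -/
noncomputable def iota (x : ℝ) : ℝ := (1 - x) / (1 + x)

/-- Even continued-fraction step.  For `y ∈ (0,1/2]` one has
`⌊(1/y+1)/2⌋ = k` whenever `1/y ∈ (2k−1, 2k+1)`, so `Te y = |1/y − 2k|`;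
explicitly `Te y = 1/y − 2` on `[1/3,1/2]`, `Te y = 1/y − 2k` on
`[1/(2k+1), 1/(2k))` and `Te y = 2k − 1/y` on `[1/(2k), 1/(2k−1))` (`k ≥ 2`). -/
noncomputable def Te (y : ℝ) : ℝ := |1 / y - 2 * (⌊(1 / y + 1) / 2⌋ : ℝ)|

/-- The spliced continued fraction (SCF) map `T : [0,1] → [0,1]`, with
`T 0 = 0`, `T 1 = 1`.  On `(0,1/2]` it is the even continued fraction map
(see `Te`), and on `(1/2,1)` it is the odd–odd map, which is the conjugate
`ι ∘ Te ∘ ι` of the even map; this agrees with the branchwise definition: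
`T x = (k x − (k−1))/(k − (k+1) x)` on `((k−1)/k, (2k−1)/(2k+1)]` and
`T x = (k − (k+1) x)/(k x − (k−1))` on `((2k−1)/(2k+1), k/(k+1)]` for `k ≥ 2`. -/
noncomputable def T (x : ℝ) : ℝ :=
  if x ≤ 0 then 0
  else if 1 ≤ x then 1
  else if x ≤ 1 / 2 then Te x
  else iota (Te (iota x))

/-- Parity label of a digit: `e` (even cusp) or `o` (odd–odd cusp). -/
inductive Par | e | o
deriving DecidableEq

/-- A candidate SCF digit `(a, ε)_s`. -/
structure Digit where
  a : ℤ
  eps : ℤ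
  s : Par
deriving DecidableEq

/-- The digit set `𝒜 = {(k,ε)_s : k ≥ 2, ε = ±1, s ∈ {e,o}} ∪ {(1,+1)_e}`. -/
def Digit.Valid (d : Digit) : Prop :=
  (2 ≤ d.a ∧ (d.eps = 1 ∨ d.eps = -1)) ∨ (d.a = 1 ∧ d.eps = 1 ∧ d.s = Par.e)

/-- The branch intervals `I_{(a,ε)_s}` of the SCF map. -/
noncomputable def branch (d : Digit) : Set ℝ :=
  match d.s with
  | Par.e =>
      if d.a = 1 then Set.Icc (1/3 : ℝ) (1/2)
      else if d.eps = 1 then Set.Ico (1 / (2 * (d.a : ℝ) + 1)) (1 / (2 * (d.a : ℝ)))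
      else Set.Ico (1 / (2 * (d.a : ℝ))) (1 / (2 * (d.a : ℝ) - 1))
  | Par.o =>
      if d.eps = 1 then
        Set.Ioc ((2 * (d.a : ℝ) - 1) / (2 * (d.a : ℝ) + 1)) ((d.a : ℝ) / ((d.a : ℝ) + 1))
      else
        Set.Ioc (((d.a : ℝ) - 1) / (d.a : ℝ)) ((2 * (d.a : ℝ) - 1) / (2 * (d.a : ℝ) + 1))

open Classical in
/-- The SCF digit of a point `y` (the unique valid digit `d` with `y ∈ I_d`;
well defined for every `y ∈ (0,1)`). -/
noncomputable def digit (y : ℝ) : Digit :=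
  if h : ∃ d : Digit, d.Valid ∧ y ∈ branch d then h.choose else ⟨1, 1, Par.e⟩

/-- The `n`-th SCF digit `(a_n(x), ε_n(x))_{s_n(x)}` of `x`, `n ≥ 1`,
determined by `T^[n−1] x ∈ I_{(a_n,ε_n)_{s_n}}`. -/
noncomputable def dig (n : ℕ) (x : ℝ) : Digit := digit (T^[n - 1] x)

/-- The `n`-th SCF partial quotient `a_n(x)`. -/
noncomputable def a (n : ℕ) (x : ℝ) : ℤ := (dig n x).a

/-- The invariant density `f_μ`. -/
noncomputable def fdens (x : ℝ) : ℝ :=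
  2 / (Real.log (2 + Real.sqrt 3) * (1 - (2 - Real.sqrt 3) * x) * (1 + Real.sqrt 3 * x))

/-- The absolutely continuous `T`-invariant probability measure `μ` on `(0,1)`. -/
noncomputable def mu : Measure ℝ :=
  (volume.restrict (Set.Ioo (0 : ℝ) 1)).withDensity fun x => ENNReal.ofReal (fdens x)

/-- The inverse branches `h_{(a,ε)_s}` of the SCF map `T`. -/
noncomputable def h (d : Digit) (x : ℝ) : ℝ :=
  match d.s with
  | Par.e => 1 / (2 * (d.a : ℝ) + (d.eps : ℝ) * x)
  | Par.o =>
      if d.eps = 1 then (((d.a : ℝ) - 1) * x + (d.a : ℝ)) / ((d.a : ℝ) * x + ((d.a : ℝ) + 1))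
      else ((d.a : ℝ) * x + ((d.a : ℝ) - 1)) / (((d.a : ℝ) + 1) * x + (d.a : ℝ))

/-- Composed inverse branch `h_{A^{(n)}} = h_{A₁} ∘ ⋯ ∘ h_{A_n}` of a word. -/
noncomputable def hWord (l : List Digit) : ℝ → ℝ :=
  l.foldr (fun d g => h d ∘ g) id

/-- The dual inverse branches `bar h_{(b,η)_t}`. -/
noncomputable def hbar (d : Digit) (y : ℝ) : ℝ :=
  match d.s with
  | Par.e => (d.eps : ℝ) / (2 * (d.a : ℝ) + y)
  | Par.o =>
      1 / (1 + (d.eps : ℝ) / (((d.a : ℝ) - ((max 0 d.eps : ℤ) : ℝ)) + 1 / (1 + y)))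

/-- The matrix `M_{(a,ε)_s}` associated with the inverse branch `h_{(a,ε)_s}`. -/
noncomputable def Mdig (d : Digit) : Matrix (Fin 2) (Fin 2) ℝ :=
  match d.s with
  | Par.e => !![0, 1; (d.eps : ℝ), 2 * (d.a : ℝ)]
  | Par.o =>
      !![(d.a : ℝ) - ((max 0 d.eps : ℤ) : ℝ), (d.a : ℝ) - ((max 0 d.eps : ℤ) : ℝ) + (d.eps : ℝ);
         (d.a : ℝ) - ((max 0 d.eps : ℤ) : ℝ) + 1, (d.a : ℝ) - ((max 0 d.eps : ℤ) : ℝ) + (d.eps : ℝ) + 1]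

/-- `M_n(x) = M_{(a₁,ε₁)_{s₁}} ⋯ M_{(a_n,ε_n)_{s_n}}`. -/
noncomputable def Mn (n : ℕ) (x : ℝ) : Matrix (Fin 2) (Fin 2) ℝ :=
  ((List.range n).map fun i => Mdig (digit (T^[i] x))).prod

/-- `P_n(x)`: the `(1,2)`-entry of `M_n(x)` (numerator of the `n`-th convergent). -/
noncomputable def Pc (n : ℕ) (x : ℝ) : ℝ := Mn n x 0 1

/-- `Q_n(x)`: the `(2,2)`-entry of `M_n(x)` (denominator of the `n`-th convergent). -/
noncomputable def Qc (n : ℕ) (x : ℝ) : ℝ := Mn n x 1 1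


lemma sqrt3_lt : 1 < Real.sqrt 3 := by
  nlinarith [Real.sq_sqrt (by norm_num : (0:ℝ) ≤ 3), Real.sqrt_nonneg 3]

lemma sqrt3_lt2 : Real.sqrt 3 < 2 := by
  nlinarith [Real.sq_sqrt (by norm_num : (3:ℝ) ≥ 0), Real.sqrt_nonneg 3]

lemma L_pos : 0 < Real.log (2 + Real.sqrt 3) := by
  apply Real.log_pos; nlinarith [Real.sqrt_nonneg 3]

noncomputable def F (x : ℝ) : ℝ :=
  (Real.log (1 + Real.sqrt 3 * x) - Real.log (1 - (2 - Real.sqrt 3) * x)) / Real.log (2 + Real.sqrt 3)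

lemma denomA_pos {x : ℝ} (hx : 0 ≤ x) : 0 < 1 + Real.sqrt 3 * x := by
  nlinarith [Real.sqrt_nonneg 3]

lemma denomB_pos {x : ℝ} (hx : x ≤ 1) : 0 < 1 - (2 - Real.sqrt 3) * x := by
  nlinarith [sqrt3_lt, sqrt3_lt2]

lemma F_deriv {x : ℝ} (hx0 : 0 ≤ x) (hx1 : x ≤ 1) : HasDerivAt F (fdens x) x := by
  have hA := denomA_pos hx0
  have hB := denomB_pos hx1
  have h1 : HasDerivAt (fun y : ℝ => 1 + Real.sqrt 3 * y) (Real.sqrt 3) x := by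
    simpa using ((hasDerivAt_id x).const_mul (Real.sqrt 3)).const_add 1
  have h2 : HasDerivAt (fun y : ℝ => 1 - (2 - Real.sqrt 3) * y) (-(2 - Real.sqrt 3)) x := by
    have := ((hasDerivAt_id x).const_mul (2 - Real.sqrt 3)).const_sub 1
    simpa using this
  have h3 := (h1.log (ne_of_gt hA))
  have h4 := (h2.log (ne_of_gt hB))
  have h5 := ((h3.sub h4).div_const (Real.log (2 + Real.sqrt 3)))
  refine h5.congr_deriv ?_
  have hL := L_pos
  unfold fdens
  field_simp
  linear_combination (-Real.sqrt 3) * mul_inv_cancel₀ (show (1 + Real.sqrt 3 * x - x * 2) ≠ 0 by linarith)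

lemma fdens_pos {x : ℝ} (hx0 : 0 ≤ x) (hx1 : x ≤ 1) : 0 < fdens x := by
  have hA := denomA_pos hx0
  have hB := denomB_pos hx1
  have hL := L_pos
  unfold fdens
  positivity

lemma fdens_contOn : ContinuousOn fdens (Icc (0:ℝ) 1) := by
  apply ContinuousOn.div continuousOn_const
  · fun_prop
  · intro x hx
    have hA := denomA_pos hx.1
    have hB := denomB_pos hx.2
    have hL := L_pos
    positivity

lemma lintegral_fdens {p q : ℝ} (hp : 0 ≤ p) (hq : q ≤ 1) (hpq : p ≤ q) :
    ∫⁻ x in Ioc p q, ENNReal.ofReal (fdens x) = ENNReal.ofReal (F q - F p) := by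
  have hsub : Icc p q ⊆ Icc (0:ℝ) 1 := Icc_subset_Icc hp hq
  have hcont : ContinuousOn fdens (Icc p q) := fdens_contOn.mono hsub
  have hii : IntervalIntegrable fdens volume p q := by
    apply ContinuousOn.intervalIntegrable
    rwa [uIcc_of_le hpq]
  have hint : IntegrableOn fdens (Ioc p q) volume :=
    (intervalIntegrable_iff_integrableOn_Ioc_of_le hpq).mp hii
  have hnn : 0 ≤ᵐ[volume.restrict (Ioc p q)] fdens := by
    refine (ae_restrict_iff' measurableSet_Ioc).2 (ae_of_all _ fun x hx => ?_)
    exact (fdens_pos (le_trans hp hx.1.le) (le_trans hx.2 hq)).le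
  rw [← MeasureTheory.ofReal_integral_eq_lintegral_ofReal hint hnn]
  congr 1
  have := intervalIntegral.integral_eq_sub_of_hasDerivAt (f := F) (f' := fdens)
    (fun x hx => by
      rw [uIcc_of_le hpq] at hx
      exact F_deriv (le_trans hp hx.1) (le_trans hx.2 hq)) hii
  rw [← this, intervalIntegral.integral_of_le hpq]

lemma F_zero : F 0 = 0 := by simp [F]

lemma piece1 {n : ℝ} (hn : 1 ≤ n) :
    F (1 / (2 * n + 1)) - F 0 =
      Real.log ((2 * n + Real.sqrt 3 + 1) / (2 * n + Real.sqrt 3 - 1)) / Real.log (2 + Real.sqrt 3) := by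
  have hb1 := sqrt3_lt
  have hb2 := sqrt3_lt2
  have hd : (0:ℝ) < 2 * n + 1 := by linarith
  have ht0 : (0:ℝ) ≤ 1 / (2 * n + 1) := by positivity
  have ht1 : 1 / (2 * n + 1) ≤ 1 := by
    rw [div_le_one hd]; linarith
  have hA := denomA_pos ht0
  have hB := denomB_pos ht1
  rw [F_zero, sub_zero]
  unfold F
  rw [← Real.log_div (ne_of_gt hA) (ne_of_gt hB)]
  congr 2
  rw [div_eq_div_iff (ne_of_gt hB) (by nlinarith)]
  field_simp
  ring

lemma piece2 {n : ℝ} (hn : 1 ≤ n) :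
    F 1 - F (n / (n + 1)) =
      Real.log ((2 * n + Real.sqrt 3 + 1) / (2 * n + Real.sqrt 3 - 1)) / Real.log (2 + Real.sqrt 3) := by
  have hb1 := sqrt3_lt
  have hb2 := sqrt3_lt2
  have hb : Real.sqrt 3 ^ 2 = 3 := Real.sq_sqrt (by norm_num)
  have hd : (0:ℝ) < n + 1 := by linarith
  have hs0 : (0:ℝ) ≤ n / (n + 1) := by positivity
  have hs1 : n / (n + 1) ≤ 1 := by rw [div_le_one hd]; linarith
  have hA1 := denomA_pos (le_refl 0 |>.trans (by norm_num : (0:ℝ) ≤ 1))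
  have hAone : (0:ℝ) < 1 + Real.sqrt 3 * 1 := denomA_pos (by norm_num)
  have hBone : (0:ℝ) < 1 - (2 - Real.sqrt 3) * 1 := denomB_pos (le_refl 1)
  have hAs := denomA_pos hs0
  have hBs := denomB_pos hs1
  unfold F
  rw [← Real.log_div (ne_of_gt hAone) (ne_of_gt hBone),
      ← Real.log_div (ne_of_gt hAs) (ne_of_gt hBs), div_sub_div_same,
      ← Real.log_div (by positivity) (by positivity)]
  congr 2
  have hne1 : 1 + Real.sqrt 3 * (n/(n+1)) ≠ 0 := ne_of_gt hAs
  have hne2 : 1 - (2 - Real.sqrt 3) * (n/(n+1)) ≠ 0 := ne_of_gt hBs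
  have hne3 : 1 - (2 - Real.sqrt 3) * 1 ≠ 0 := ne_of_gt hBone
  have hne4 : 2 * n + Real.sqrt 3 - 1 ≠ 0 := by nlinarith
  have hne5 : (n:ℝ) + 1 ≠ 0 := ne_of_gt hd
  have hne6 : (-1 + Real.sqrt 3) ≠ 0 := by nlinarith
  have hne7 : (1 + (Real.sqrt 3 * n - n)) ≠ 0 := by nlinarith
  have hne8 : (1 - (2 - Real.sqrt 3)) ≠ 0 := by nlinarith
  have hne9 : (n + 1 - (2 - Real.sqrt 3) * n) ≠ 0 := by nlinarith
  rw [div_eq_div_iff (div_ne_zero hne1 hne2) hne4]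
  field_simp
  linear_combination (-2*n*(n+1)^2 + 4*n^2 + 2*n^3) * hb

lemma mu_U {N : ℕ} (hN : 1 ≤ N) :
    mu (Set.Icc (0 : ℝ) (1 / (2 * (N : ℝ) + 1)) ∪ Set.Icc ((N : ℝ) / ((N : ℝ) + 1)) 1) =
      ENNReal.ofReal ((2 / Real.log (2 + Real.sqrt 3)) *
        Real.log ((2 * (N : ℝ) + Real.sqrt 3 + 1) / (2 * (N : ℝ) + Real.sqrt 3 - 1))) := by
  have hn : (1:ℝ) ≤ (N:ℝ) := by exact_mod_cast hN
  set n : ℝ := (N : ℝ)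
  set t : ℝ := 1 / (2 * n + 1) with ht
  set s : ℝ := n / (n + 1) with hs
  have ht0 : 0 < t := by positivity
  have ht3 : t ≤ 1/3 := by
    rw [ht, div_le_div_iff₀ (by linarith) (by norm_num)]; linarith
  have hs2 : (1:ℝ)/2 ≤ s := by
    rw [hs, div_le_div_iff₀ (by norm_num) (by linarith)]; linarith
  have hs1 : s < 1 := by
    rw [hs, div_lt_one (by linarith)]; linarith
  have hts : t < s := by linarith
  have hU : MeasurableSet (Set.Icc (0:ℝ) t ∪ Set.Icc s 1) :=
    measurableSet_Icc.union measurableSet_Icc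
  have hset : (Set.Icc (0:ℝ) t ∪ Set.Icc s 1) ∩ Set.Ioo 0 1 = Set.Ioc 0 t ∪ Set.Ico s 1 := by
    ext x
    simp only [Set.mem_inter_iff, Set.mem_union, Set.mem_Icc, Set.mem_Ioo, Set.mem_Ioc,
      Set.mem_Ico]
    constructor
    · rintro ⟨h1 | h1, h2⟩
      · exact Or.inl ⟨h2.1, h1.2⟩
      · exact Or.inr ⟨h1.1, h2.2⟩
    · rintro (h1 | h1)
      · exact ⟨Or.inl ⟨h1.1.le, h1.2⟩, h1.1, by linarith [h1.2]⟩
      · exact ⟨Or.inr ⟨h1.1, h1.2.le⟩, by linarith [h1.1], h1.2⟩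
  have hdisj : Disjoint (Set.Ioc (0:ℝ) t) (Set.Ico s 1) := by
    rw [Set.disjoint_left]
    rintro x ⟨_, hx2⟩ ⟨hx3, _⟩
    linarith
  rw [mu, withDensity_apply _ hU, Measure.restrict_restrict hU, hset,
    lintegral_union measurableSet_Ico hdisj,
    Measure.restrict_congr_set Ico_ae_eq_Ioc,
    lintegral_fdens le_rfl (by linarith) ht0.le,
    lintegral_fdens (by linarith : (0:ℝ) ≤ s) le_rfl hs1.le,
    ← ENNReal.ofReal_add, piece1 hn, piece2 hn]
  · congr 1; ring
  · rw [piece1 hn]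
    have hR : (1:ℝ) ≤ (2 * n + Real.sqrt 3 + 1) / (2 * n + Real.sqrt 3 - 1) := by
      rw [le_div_iff₀ (by nlinarith [sqrt3_lt])]; linarith
    exact div_nonneg (Real.log_nonneg hR) L_pos.le
  · rw [piece2 hn]
    have hR : (1:ℝ) ≤ (2 * n + Real.sqrt 3 + 1) / (2 * n + Real.sqrt 3 - 1) := by
      rw [le_div_iff₀ (by nlinarith [sqrt3_lt])]; linarith
    exact div_nonneg (Real.log_nonneg hR) L_pos.le



lemma irr_ne_ratio {x : ℝ} (hirr : Irrational x) (p q : ℤ) : x ≠ (p:ℝ)/(q:ℝ) := by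
  intro h
  exact hirr ⟨(p:ℚ)/(q:ℚ), by push_cast; exact h.symm⟩

lemma branch_subset {N : ℕ} (hN : 1 ≤ N) {d : Digit} (hd : d.Valid) (ha : (N : ℤ) < d.a) :
    branch d ⊆ Set.Icc (0:ℝ) (1 / (2 * (N:ℝ) + 1)) ∪ Set.Icc ((N:ℝ) / ((N:ℝ) + 1)) 1 := by
  have hn : (1:ℝ) ≤ (N:ℝ) := by exact_mod_cast hN
  obtain ⟨av, ev, sv⟩ := d
  simp only at ha ⊢
  have ha2 : 2 ≤ av := by
    rcases hd with ⟨h, _⟩ | ⟨h, _, _⟩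
    · exact h
    · simp only at h; omega
  have heps : ev = 1 ∨ ev = -1 := by
    rcases hd with ⟨_, h⟩ | ⟨_, h, _⟩
    · exact h
    · exact Or.inl h
  have hk : (N:ℝ) + 1 ≤ (av : ℝ) := by
    have : (N:ℤ) + 1 ≤ av := ha
    exact_mod_cast this
  have hkpos : (0:ℝ) < (av:ℝ) := by linarith
  intro x hx
  cases sv with
  | e =>
    rcases heps with he | he <;> subst he
    · simp only [branch, if_neg (by omega : av ≠ 1), if_pos rfl] at hx
      obtain ⟨hx1, hx2⟩ := hx
      left
      constructor
      · have : (0:ℝ) < 1 / (2*(av:ℝ)+1) := by positivity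
        linarith
      · have h1 : (1:ℝ)/(2*(av:ℝ)) ≤ 1/(2*(N:ℝ)+1) :=
          one_div_le_one_div_of_le (by linarith) (by linarith)
        linarith
    · simp only [branch, if_neg (by omega : av ≠ 1), if_neg (by omega : ¬ (-1 : ℤ) = 1)] at hx
      obtain ⟨hx1, hx2⟩ := hx
      left
      constructor
      · have : (0:ℝ) < 1 / (2*(av:ℝ)) := by positivity
        linarith
      · have h1 : (1:ℝ)/(2*(av:ℝ)-1) ≤ 1/(2*(N:ℝ)+1) :=
          one_div_le_one_div_of_le (by linarith) (by linarith)
        linarith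
  | o =>
    rcases heps with he | he <;> subst he
    · simp only [branch, if_pos rfl] at hx
      obtain ⟨hx1, hx2⟩ := hx
      right
      constructor
      · have h1 : (N:ℝ)/((N:ℝ)+1) ≤ (2*(av:ℝ)-1)/(2*(av:ℝ)+1) := by
          rw [div_le_div_iff₀ (by linarith) (by linarith)]
          nlinarith
        linarith
      · have h2 : (av:ℝ)/((av:ℝ)+1) ≤ 1 := by
          rw [div_le_one (by linarith)]; linarith
        linarith
    · simp only [branch, if_neg (by omega : ¬ (-1 : ℤ) = 1)] at hx
      obtain ⟨hx1, hx2⟩ := hx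
      right
      constructor
      · have h1 : (N:ℝ)/((N:ℝ)+1) ≤ ((av:ℝ)-1)/(av:ℝ) := by
          rw [div_le_div_iff₀ (by linarith) (by linarith)]
          nlinarith
        linarith
      · have h2 : (2*(av:ℝ)-1)/(2*(av:ℝ)+1) ≤ 1 := by
          rw [div_le_one (by linarith)]; linarith
        linarith

lemma mem_branch_gt {N : ℕ} (hN : 1 ≤ N) {x : ℝ} {d : Digit} (hd : d.Valid)
    (hx : x ∈ branch d)
    (hmem : x ∈ Set.Ioo (0:ℝ) (1 / (2 * (N:ℝ) + 1)) ∪ Set.Ioo ((N:ℝ) / ((N:ℝ) + 1)) 1) :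
    (N : ℤ) < d.a := by
  have hn : (1:ℝ) ≤ (N:ℝ) := by exact_mod_cast hN
  have ht3 : 1 / (2*(N:ℝ)+1) ≤ 1/3 := one_div_le_one_div_of_le (by norm_num) (by linarith)
  have hs2 : (1:ℝ)/2 ≤ (N:ℝ)/((N:ℝ)+1) := by
    rw [div_le_div_iff₀ (by norm_num) (by linarith)]; linarith
  obtain ⟨av, ev, sv⟩ := d
  simp only [Digit.Valid] at hd
  simp only
  have ha12 : 2 ≤ av ∨ av = 1 := by
    rcases hd with ⟨h, _⟩ | ⟨h, _, _⟩
    · exact Or.inl h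
    · exact Or.inr h
  rcases ha12 with ha2 | ha1
  swap
  · -- a = 1 case: branch is Icc 1/3 1/2 (s must be e by validity)
    exfalso
    have hse : sv = Par.e := by
      rcases hd with ⟨h, _⟩ | ⟨_, _, h⟩
      · exfalso; omega
      · exact h
    subst hse; subst ha1
    simp only [branch, if_pos rfl] at hx
    obtain ⟨hx1, hx2⟩ := hx
    rcases hmem with ⟨h1, h2⟩ | ⟨h1, h2⟩
    · linarith
    · linarith
  · have heps : ev = 1 ∨ ev = -1 := by
      rcases hd with ⟨_, h⟩ | ⟨_, h, _⟩
      · exact h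
      · exact Or.inl h
    have hk2 : (2:ℝ) ≤ (av:ℝ) := by exact_mod_cast ha2
    have goal_of_real : (N:ℝ) < (av:ℝ) → (N:ℤ) < av := by
      intro h; exact_mod_cast h
    cases sv with
    | e =>
      rcases heps with he | he <;> subst he
      · simp only [branch, if_neg (by omega : av ≠ 1), if_pos rfl] at hx
        obtain ⟨hx1, hx2⟩ := hx
        rcases hmem with ⟨h1, h2⟩ | ⟨h1, h2⟩
        · apply goal_of_real
          by_contra hc
          push_neg at hc
          have : (1:ℝ)/(2*(N:ℝ)+1) ≤ 1/(2*(av:ℝ)+1) :=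
            one_div_le_one_div_of_le (by linarith) (by linarith)
          linarith
        · exfalso
          have : (1:ℝ)/(2*(av:ℝ)) ≤ 1/4 := one_div_le_one_div_of_le (by norm_num) (by linarith)
          linarith
      · simp only [branch, if_neg (by omega : av ≠ 1), if_neg (by omega : ¬ (-1 : ℤ) = 1)] at hx
        obtain ⟨hx1, hx2⟩ := hx
        rcases hmem with ⟨h1, h2⟩ | ⟨h1, h2⟩
        · apply goal_of_real
          by_contra hc
          push_neg at hc
          have : (1:ℝ)/(2*(N:ℝ)+1) ≤ 1/(2*(av:ℝ)) :=
            one_div_le_one_div_of_le (by linarith) (by linarith)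
          linarith
        · exfalso
          have : (1:ℝ)/(2*(av:ℝ)-1) ≤ 1/3 := one_div_le_one_div_of_le (by norm_num) (by linarith)
          linarith
    | o =>
      rcases heps with he | he <;> subst he
      · simp only [branch, if_pos rfl] at hx
        obtain ⟨hx1, hx2⟩ := hx
        rcases hmem with ⟨h1, h2⟩ | ⟨h1, h2⟩
        · exfalso
          have : (1:ℝ)/2 ≤ (2*(av:ℝ)-1)/(2*(av:ℝ)+1) := by
            rw [div_le_div_iff₀ (by norm_num) (by linarith)]; linarith
          linarith
        · apply goal_of_real
          by_contra hc
          push_neg at hc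
          have : (av:ℝ)/((av:ℝ)+1) ≤ (N:ℝ)/((N:ℝ)+1) := by
            rw [div_le_div_iff₀ (by linarith) (by linarith)]; nlinarith
          linarith
      · simp only [branch, if_neg (by omega : ¬ (-1 : ℤ) = 1)] at hx
        obtain ⟨hx1, hx2⟩ := hx
        rcases hmem with ⟨h1, h2⟩ | ⟨h1, h2⟩
        · exfalso
          have : (1:ℝ)/2 ≤ ((av:ℝ)-1)/(av:ℝ) := by
            rw [div_le_div_iff₀ (by norm_num) (by linarith)]; linarith
          linarith
        · apply goal_of_real
          by_contra hc
          push_neg at hc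
          have : (2*(av:ℝ)-1)/(2*(av:ℝ)+1) ≤ (N:ℝ)/((N:ℝ)+1) := by
            rw [div_le_div_iff₀ (by linarith) (by linarith)]; nlinarith
          linarith



lemma exists_branch {N : ℕ} (hN : 1 ≤ N) {x : ℝ} (hirr : Irrational x)
    (hmem : x ∈ Set.Ioo (0:ℝ) (1 / (2 * (N:ℝ) + 1)) ∪ Set.Ioo ((N:ℝ) / ((N:ℝ) + 1)) 1) :
    ∃ d : Digit, d.Valid ∧ x ∈ branch d := by
  have hn : (1:ℝ) ≤ (N:ℝ) := by exact_mod_cast hN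
  rcases hmem with ⟨hx0, hxt⟩ | ⟨hxs, hx1⟩
  · -- left piece : even branches
    have hxt' : x * (2*(N:ℝ)+1) < 1 := by
      have := (lt_div_iff₀ (by linarith : (0:ℝ) < 2*(N:ℝ)+1)).mp hxt
      linarith
    set m : ℤ := ⌊1/x⌋ with hm
    have hm1 : (2*(N:ℤ)+1) ≤ m := by
      apply Int.le_floor.mpr
      push_cast
      rw [le_div_iff₀ hx0]
      linarith
    have hm1' : (3:ℤ) ≤ m := by omega
    have hm2 : (m:ℝ) ≤ 1/x := Int.floor_le _
    have hm3 : 1/x < (m:ℝ) + 1 := by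
      have := Int.lt_floor_add_one (1/x)
      push_cast at this ⊢
      linarith
    have hm2' : (m:ℝ) < 1/x := by
      rcases lt_or_eq_of_le hm2 with h | h
      · exact h
      · exfalso
        apply irr_ne_ratio hirr 1 m
        push_cast
        rw [h, one_div_one_div]
    -- so m < 1/x < m+1, i.e. 1/(m+1) < x < 1/m
    have hmpos : (0:ℝ) < (m:ℝ) := by exact_mod_cast (by omega : (0:ℤ) < m)
    have hxlt : x < 1/(m:ℝ) := by
      rw [lt_div_iff₀ hmpos]
      have := (lt_div_iff₀ hx0).mp hm2'
      linarith
    have hxgt : 1/((m:ℝ)+1) < x := by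
      rw [div_lt_iff₀ (by linarith)]
      have := (div_lt_iff₀ hx0).mp hm3
      linarith
    rcases Int.even_or_odd m with ⟨k, hk⟩ | ⟨k, hk⟩
    · -- m = 2k : digit (k, +1)_e
      have hk2 : (2:ℤ) ≤ k := by omega
      refine ⟨⟨k, 1, Par.e⟩, Or.inl ⟨hk2, Or.inl rfl⟩, ?_⟩
      simp only [branch, if_neg (by omega : k ≠ 1), if_pos rfl]
      have hkr : (m:ℝ) = 2*(k:ℝ) := by push_cast [hk]; ring
      constructor
      · have : 1/((m:ℝ)+1) = 1/(2*(k:ℝ)+1) := by rw [hkr]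
        rw [← this]; exact hxgt.le
      · have : 1/(m:ℝ) = 1/(2*(k:ℝ)) := by rw [hkr]
        rw [← this]; exact hxlt
    · -- m = 2k+1 : digit (k+1, -1)_e
      have hk1 : (1:ℤ) ≤ k := by omega
      refine ⟨⟨k+1, -1, Par.e⟩, Or.inl ⟨show (2:ℤ) ≤ k+1 by omega, Or.inr rfl⟩, ?_⟩
      simp only [branch, if_neg (by omega : k+1 ≠ 1), if_neg (by omega : ¬ (-1 : ℤ) = 1)]
      have hkr : (m:ℝ) = 2*(k:ℝ)+1 := by push_cast [hk]; ring
      constructor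
      · have : 1/((m:ℝ)+1) = 1/(2*((k:ℤ)+1:ℤ):ℝ) := by push_cast; rw [hkr]; ring_nf
        rw [← this]; push_cast at hxgt ⊢; exact hxgt.le
      · have : 1/(m:ℝ) = 1/(2*((k:ℝ)+1)-1) := by rw [hkr]; ring_nf
        push_cast
        rw [← this]; exact hxlt
  · -- right piece : odd branches
    have hy0 : (0:ℝ) < 1 - x := by linarith
    have hyN : 1 - x < 1/((N:ℝ)+1) := by
      have h1 : (N:ℝ)/((N:ℝ)+1) = 1 - 1/((N:ℝ)+1) := by field_simp; ring
      rw [h1] at hxs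
      linarith
    set m : ℤ := ⌊1/(1-x)⌋ with hm
    have hm1 : ((N:ℤ)+1) ≤ m := by
      apply Int.le_floor.mpr
      push_cast
      rw [le_div_iff₀ hy0]
      have h2 := (lt_div_iff₀ (by linarith : (0:ℝ) < (N:ℝ)+1)).mp hyN
      linarith
    have hm1' : (2:ℤ) ≤ m := by omega
    have hmpos : (0:ℝ) < (m:ℝ) := by exact_mod_cast (by omega : (0:ℤ) < m)
    have hm2 : (m:ℝ) ≤ 1/(1-x) := Int.floor_le _
    have hm3 : 1/(1-x) < (m:ℝ) + 1 := by
      have := Int.lt_floor_add_one (1/(1-x))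
      push_cast at this ⊢
      linarith
    have hm2' : (m:ℝ) < 1/(1-x) := by
      rcases lt_or_eq_of_le hm2 with h | h
      · exact h
      · exfalso
        apply irr_ne_ratio hirr (m-1) m
        have h1x : 1 - x = 1/(m:ℝ) := by
          field_simp at h
          field_simp
          linarith [h]
        push_cast
        rw [eq_div_iff (ne_of_gt hmpos)]
        have : x = 1 - 1/(m:ℝ) := by linarith
        rw [this]
        field_simp
    -- (m-1)/m < x < m/(m+1)
    have hxgt : ((m:ℝ)-1)/(m:ℝ) < x := by
      have hylt : 1 - x < 1/(m:ℝ) := by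
        rw [lt_div_iff₀ hmpos]
        have := (lt_div_iff₀ hy0).mp hm2'
        linarith
      rw [div_lt_iff₀ hmpos]
      have := (lt_div_iff₀ hmpos).mp hylt
      nlinarith
    have hxlt : x < (m:ℝ)/((m:ℝ)+1) := by
      have hygt : 1/((m:ℝ)+1) < 1 - x := by
        rw [div_lt_iff₀ (by linarith)]
        have := (div_lt_iff₀ hy0).mp hm3
        linarith
      rw [lt_div_iff₀ (by linarith : (0:ℝ) < (m:ℝ)+1)]
      have := (div_lt_iff₀ (by linarith : (0:ℝ) < (m:ℝ)+1)).mp hygt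
      nlinarith
    have hxne : x ≠ (2*(m:ℝ)-1)/(2*(m:ℝ)+1) := by
      have := irr_ne_ratio hirr (2*m-1) (2*m+1)
      push_cast at this
      exact this
    rcases lt_or_gt_of_ne hxne with hlt | hgt
    · refine ⟨⟨m, -1, Par.o⟩, Or.inl ⟨hm1', Or.inr rfl⟩, ?_⟩
      simp only [branch, if_neg (by omega : ¬ (-1 : ℤ) = 1)]
      exact ⟨hxgt, hlt.le⟩
    · refine ⟨⟨m, 1, Par.o⟩, Or.inl ⟨hm1', Or.inl rfl⟩, ?_⟩
      simp only [branch, if_pos rfl]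
      exact ⟨hgt, hxlt.le⟩


/-- the μ-measure of `{a₁ > N} = [0,1/(2N+1)] ∪ [N/(N+1),1]`. -/
theorem measure_first_digit_large :
    ∀ N : ℕ, 1 ≤ N →
      mu (Set.Icc (0 : ℝ) (1 / (2 * (N : ℝ) + 1)) ∪ Set.Icc ((N : ℝ) / ((N : ℝ) + 1)) 1) =
        ENNReal.ofReal ((2 / Real.log (2 + Real.sqrt 3)) *
          Real.log (1 + 1 / ((N : ℝ) + (Real.sqrt 3 - 1) / 2))) ∧
      mu {x : ℝ | x ∈ Set.Ioo (0 : ℝ) 1 ∧ Irrational x ∧ (N : ℤ) < a 1 x} =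
        ENNReal.ofReal ((2 / Real.log (2 + Real.sqrt 3)) *
          Real.log ((2 * (N : ℝ) + Real.sqrt 3 + 1) / (2 * (N : ℝ) + Real.sqrt 3 - 1))) := by
  intro N hN
  have hn : (1:ℝ) ≤ (N:ℝ) := by exact_mod_cast hN
  have hb1 := sqrt3_lt
  have harg : 1 + 1 / ((N:ℝ) + (Real.sqrt 3 - 1) / 2) =
      (2 * (N:ℝ) + Real.sqrt 3 + 1) / (2 * (N:ℝ) + Real.sqrt 3 - 1) := by
    have h1 : (N:ℝ) + (Real.sqrt 3 - 1)/2 ≠ 0 := by nlinarith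
    have h2 : 2*(N:ℝ) + Real.sqrt 3 - 1 ≠ 0 := by nlinarith
    have h2' : -1 + (N:ℝ)*2 + Real.sqrt 3 ≠ 0 := by nlinarith
    field_simp
    have hc : (-1 + (N:ℝ)*2 + Real.sqrt 3) * (-1 + (N:ℝ)*2 + Real.sqrt 3)⁻¹ = 1 :=
      mul_inv_cancel₀ h2'
    linear_combination (-1) * hc
  constructor
  · rw [mu_U hN, harg]
  · -- squeeze between W and U
    set t : ℝ := 1 / (2 * (N:ℝ) + 1) with ht
    set sS : ℝ := (N:ℝ) / ((N:ℝ) + 1) with hsS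
    have ht0 : 0 < t := by positivity
    have ht3 : t ≤ 1/3 := one_div_le_one_div_of_le (by norm_num) (by linarith)
    have hs2 : (1:ℝ)/2 ≤ sS := by
      rw [hsS, div_le_div_iff₀ (by norm_num) (by linarith)]; linarith
    have hs1 : sS < 1 := by
      rw [hsS, div_lt_one (by linarith)]; linarith
    set U : Set ℝ := Set.Icc (0:ℝ) t ∪ Set.Icc sS 1 with hU
    set W : Set ℝ := {x : ℝ | Irrational x} ∩ (Set.Ioo (0:ℝ) t ∪ Set.Ioo sS 1) with hW
    set V : Set ℝ := {x : ℝ | x ∈ Set.Ioo (0 : ℝ) 1 ∧ Irrational x ∧ (N : ℤ) < a 1 x} with hV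
    have ha1 : ∀ x : ℝ, a 1 x = (digit x).a := by
      intro x
      simp only [a, dig, Nat.sub_self, Function.iterate_zero, id_eq]
    have hWV : W ⊆ V := by
      rintro x ⟨hirr, hmem⟩
      refine ⟨?_, hirr, ?_⟩
      · rcases hmem with ⟨h1, h2⟩ | ⟨h1, h2⟩
        · exact ⟨h1, by linarith⟩
        · exact ⟨by linarith, h2⟩
      · have hex : ∃ d : Digit, d.Valid ∧ x ∈ branch d := exists_branch hN hirr hmem
        have hdig : (digit x).Valid ∧ x ∈ branch (digit x) := by
          simp only [digit, dif_pos hex]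
          exact hex.choose_spec
        rw [ha1 x]
        exact mem_branch_gt hN hdig.1 hdig.2 hmem
    have hVU : V ⊆ U := by
      rintro x ⟨hIoo, hirr, hgt⟩
      rw [ha1 x] at hgt
      by_cases hex : ∃ d : Digit, d.Valid ∧ x ∈ branch d
      · have hdig : (digit x).Valid ∧ x ∈ branch (digit x) := by
          simp only [digit, dif_pos hex]
          exact hex.choose_spec
        exact branch_subset hN hdig.1 hgt hdig.2
      · exfalso
        have : digit x = ⟨1, 1, Par.e⟩ := by simp only [digit, dif_neg hex]
        rw [this] at hgt
        simp only at hgt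
        omega
    have hUW : U \ W ⊆ {x : ℝ | ¬ Irrational x} := by
      rintro x ⟨hxU, hxW⟩
      intro hirr
      apply hxW
      refine ⟨hirr, ?_⟩
      rcases hxU with ⟨h1, h2⟩ | ⟨h1, h2⟩
      · left
        constructor
        · rcases lt_or_eq_of_le h1 with h | h
          · exact h
          · exact absurd h.symm (by simpa using irr_ne_ratio hirr 0 1)
        · rcases lt_or_eq_of_le h2 with h | h
          · exact h
          · exfalso
            apply irr_ne_ratio hirr 1 (2*(N:ℤ)+1)
            rw [h, ht]
            push_cast
            ring
      · right
        constructor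
        · rcases lt_or_eq_of_le h1 with h | h
          · exact h
          · exfalso
            apply irr_ne_ratio hirr (N:ℤ) ((N:ℤ)+1)
            rw [← h, hsS]
            push_cast
            ring
        · rcases lt_or_eq_of_le h2 with h | h
          · exact h
          · exfalso
            apply irr_ne_ratio hirr 1 1
            rw [h]
            norm_num
    have hmuUW : mu (U \ W) = 0 := by
      have hset : {x : ℝ | ¬ Irrational x} = Set.range ((↑) : ℚ → ℝ) := by
        ext x
        simp [Irrational]
      have hvol : volume {x : ℝ | ¬ Irrational x} = 0 := by
        rw [hset]
        exact (Set.countable_range _).measure_zero volume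
      have hac : mu ≪ volume :=
        (withDensity_absolutelyContinuous _ _).trans
          (Measure.absolutelyContinuous_of_le Measure.restrict_le_self)
      exact measure_mono_null hUW (hac hvol)
    have h1 : mu W ≤ mu V := measure_mono hWV
    have h2 : mu V ≤ mu U := measure_mono hVU
    have h3 : mu U ≤ mu W := by
      calc mu U ≤ mu (W ∪ (U \ W)) := measure_mono (fun x hx => by
              by_cases hxW : x ∈ W
              · exact Or.inl hxW
              · exact Or.inr ⟨hx, hxW⟩)
        _ ≤ mu W + mu (U \ W) := measure_union_le _ _
        _ = mu W := by rw [hmuUW, add_zero]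
    have hVUeq : mu V = mu U := le_antisymm h2 (h3.trans h1)
    rw [hVUeq, hU, ht, hsS, mu_U hN]

end SCF
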